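/- Let V be a monoidal additive category, (A, m, i) a monoid object in V, and (M, μ, ν) an A-bimodule equipped with a morphism d : A → M satisfying the Leibniz rule. Then the following are equivalent: (i) 1_A·d := μ ∘ (1_A ⊗ d) : A ⊗ A → M is an epimorphism in V; (ii) d·1_A := ν ∘ (d ⊗ 1_A) : A ⊗ A → M is an epimorphism in V; (iii) the morphism 1_A·d·1_A : (A ⊗ A) ⊗ A → M, given (suppressing associators) by μ ∘ (1_A ⊗ (ν ∘ (d ⊗ 1_A))), is an epimorphism in V. -/

import Mathlib

/-!
Statement 7: For an `A`-bimodule `M` with a morphism `d : A ⟶ M` satisfying the Leibniz rule,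
the following are equivalent:
(i) `1_A·d : A ⊗ A ⟶ M` is an epimorphism;
(ii) `d·1_A : A ⊗ A ⟶ M` is an epimorphism;
(iii) `1_A·d·1_A : (A ⊗ A) ⊗ A ⟶ M` (suppressing associators) is an epimorphism.
-/

open CategoryTheory MonoidalCategory Limits

universe v u

variable {V : Type u} [Category.{v} V] [MonoidalCategory V]
variable [Preadditive V] [MonoidalPreadditive V] [HasFiniteBiproducts V]

omit [HasFiniteBiproducts V] in
theorem aux_whiskerLeft_sub (X : V) {Y Z : V} (f g : Y ⟶ Z) :
    X ◁ (f - g) = X ◁ f - X ◁ g := by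
  rw [eq_sub_iff_add_eq, ← MonoidalPreadditive.whiskerLeft_add, sub_add_cancel]

omit [HasFiniteBiproducts V] in
theorem aux_sub_whiskerRight {Y Z : V} (f g : Y ⟶ Z) (X : V) :
    (f - g) ▷ X = f ▷ X - g ▷ X := by
  rw [eq_sub_iff_add_eq, ← MonoidalPreadditive.add_whiskerRight, sub_add_cancel]

/-- **Statement 7.** -/
theorem epi_oneDotD_iff_epi_dDotOne_iff_epi_oneDotDDotOne
    (A : Mon V) (M : Bimod A A) (d : A.X ⟶ M.X)
    (leibniz : A.mon.mul ≫ d = (d ▷ A.X) ≫ M.actRight + (A.X ◁ d) ≫ M.actLeft) :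
    List.TFAE
      [Epi ((A.X ◁ d) ≫ M.actLeft),
       Epi ((d ▷ A.X) ≫ M.actRight),
       Epi ((α_ A.X A.X A.X).hom ≫ (A.X ◁ ((d ▷ A.X) ≫ M.actRight)) ≫ M.actLeft)] := by
  set f := (A.X ◁ d) ≫ M.actLeft with hf
  set g := (d ▷ A.X) ≫ M.actRight with hg
  have hd1 : (λ_ A.X).inv ≫ (A.mon.one ▷ A.X) ≫ f = d := by
    rw [hf, ← whisker_exchange_assoc, M.one_actLeft]
    simp
  have hd2 : (ρ_ A.X).inv ≫ (A.X ◁ A.mon.one) ≫ g = d := by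
    rw [hg, whisker_exchange_assoc, M.actRight_one]
    simp
  have hgd : g = A.mon.mul ≫ d - f := by rw [leibniz]; abel
  have hfd : f = A.mon.mul ≫ d - g := by rw [leibniz]; abel
  have t2 : (α_ A.X A.X A.X).hom ≫ (A.X ◁ f) ≫ M.actLeft = (A.mon.mul ▷ A.X) ≫ f := by
    rw [hf]
    simp only [MonoidalCategory.whiskerLeft_comp, Category.assoc]
    rw [← associator_naturality_right_assoc, ← M.left_assoc, whisker_exchange_assoc]
  have hC : (α_ A.X A.X A.X).hom ≫ (A.X ◁ g) ≫ M.actLeft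
      = ((α_ A.X A.X A.X).hom ≫ (A.X ◁ A.mon.mul) - (A.mon.mul ▷ A.X)) ≫ f := by
    rw [hgd, aux_whiskerLeft_sub]
    simp only [Preadditive.sub_comp, Preadditive.comp_sub,
      MonoidalCategory.whiskerLeft_comp, Category.assoc]
    rw [t2]
  have hAlt : (α_ A.X A.X A.X).hom ≫ (A.X ◁ g) ≫ M.actLeft = (f ▷ A.X) ≫ M.actRight := by
    rw [hg, hf]
    simp only [MonoidalCategory.whiskerLeft_comp, comp_whiskerRight, Category.assoc,
      M.middle_assoc]
    rw [associator_naturality_middle_assoc]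
  have t4 : (α_ A.X A.X A.X).hom ≫ (A.X ◁ A.mon.mul) ≫ g = (g ▷ A.X) ≫ M.actRight := by
    rw [hg]
    simp only [comp_whiskerRight, Category.assoc]
    rw [whisker_exchange_assoc, M.right_assoc, associator_inv_naturality_left_assoc,
      Iso.hom_inv_id_assoc]
  have hD : (α_ A.X A.X A.X).hom ≫ (A.X ◁ g) ≫ M.actLeft
      = ((A.mon.mul ▷ A.X) - (α_ A.X A.X A.X).hom ≫ (A.X ◁ A.mon.mul)) ≫ g := by
    rw [hAlt, hfd, aux_sub_whiskerRight]
    simp only [Preadditive.sub_comp, Preadditive.comp_sub, comp_whiskerRight, Category.assoc]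
    rw [t4]
  have hE : (λ_ (A.X ⊗ A.X)).inv ≫ (α_ (𝟙_ V) A.X A.X).inv ≫ ((A.mon.one ▷ A.X) ▷ A.X) ≫
      (α_ A.X A.X A.X).hom ≫ (A.X ◁ g) ≫ M.actLeft = g := by
    rw [associator_naturality_left_assoc, Iso.inv_hom_id_assoc,
      ← whisker_exchange_assoc, M.one_actLeft]
    simp
  tfae_have 1 → 2 := by
    intro h1
    rw [Preadditive.epi_iff_cancel_zero] at h1 ⊢
    intro R u hu
    have hdu : d ≫ u = 0 := by
      rw [← hd2]
      simp only [Category.assoc, hu, comp_zero]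
    apply h1
    rw [hfd]
    simp only [Preadditive.sub_comp, Category.assoc, hdu, hu, comp_zero, sub_zero]
  tfae_have 2 → 1 := by
    intro h2
    rw [Preadditive.epi_iff_cancel_zero] at h2 ⊢
    intro R u hu
    have hdu : d ≫ u = 0 := by
      rw [← hd1]
      simp only [Category.assoc, hu, comp_zero]
    apply h2
    rw [hgd]
    simp only [Preadditive.sub_comp, Category.assoc, hdu, hu, comp_zero, sub_zero]
  tfae_have 2 → 3 := by
    intro h2
    rw [Preadditive.epi_iff_cancel_zero] at h2 ⊢
    intro R u hu
    apply h2
    rw [← hE]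
    simp only [Category.assoc, hu, comp_zero]
  tfae_have 3 → 1 := by
    intro h3
    rw [Preadditive.epi_iff_cancel_zero] at h3 ⊢
    intro R u hu
    apply h3
    rw [hC]
    simp only [Category.assoc, hu, comp_zero]
  tfae_finish
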